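/- Every ascending chain of divisor-closed submonoids of P_fin,0(ℕ) becomes stationary: if H₁ ⊆ H₂ ⊆ H₃ ⊆ ⋯ is a chain of divisor-closed submonoids of P_fin,0(ℕ), then there exists n such that H_m = H_n for all m ≥ n. -/

import Mathlib

open Pointwise

/-- Divisibility in the restricted power monoid `P_fin,0(ℕ)`:
`B` divides `A` if `A = B + C` for some finite `C` containing `0`. -/
def Dvd0 (B A : Finset ℕ) : Prop := ∃ C : Finset ℕ, 0 ∈ C ∧ A = B + C

/-- Divisor-closed submonoids of `P_fin,0(ℕ)`. -/
def IsDCS (H : Set (Finset ℕ)) : Prop :=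
  (∀ A ∈ H, 0 ∈ A) ∧ ({0} : Finset ℕ) ∈ H ∧
    (∀ A ∈ H, ∀ B ∈ H, A + B ∈ H) ∧
    (∀ A ∈ H, ∀ B : Finset ℕ, 0 ∈ B → Dvd0 B A → B ∈ H)


lemma pair_rep_coprime {a b x : ℕ} (ha : 0 < a) (hb : 0 < b) (h : Nat.Coprime a b)
    (hx : a * b ≤ x) : ∃ i j : ℕ, x = i * a + j * b := by
  rcases eq_or_lt_of_le (show 1 ≤ b from hb) with hb1 | hb1
  · exact ⟨0, x, by rw [← hb1]; omega⟩
  haveI : NeZero b := ⟨by omega⟩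
  set u : (ZMod b)ˣ := ZMod.unitOfCoprime a h with hu
  set i := ((x : ZMod b) * (u⁻¹ : (ZMod b)ˣ)).val with hi
  have hilt : i < b := ZMod.val_lt _
  have hmod : i * a ≡ x [MOD b] := by
    apply (ZMod.natCast_eq_natCast_iff _ _ _).mp
    push_cast
    rw [hi, ZMod.natCast_val, ZMod.cast_id]
    have hau : (a : ZMod b) = (u : ZMod b) := (ZMod.coe_unitOfCoprime a h).symm
    rw [hau, mul_assoc, ← Units.val_mul, inv_mul_cancel, Units.val_one, mul_one]
  have hle : i * a ≤ x := by
    have h1 : i * a ≤ (b - 1) * a := Nat.mul_le_mul_right a (by omega)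
    have h2 : (b - 1 + 1) * a = b * a := by rw [Nat.sub_add_cancel hb]
    rw [add_mul, one_mul] at h2
    have h3 : a * b = b * a := mul_comm a b
    omega
  obtain ⟨j, hj⟩ := (Nat.modEq_iff_dvd' hle).mp hmod
  exact ⟨i, j, by rw [mul_comm j b]; omega⟩

lemma pair_rep {a b x : ℕ} (ha : 0 < a) (hb : 0 < b) (hd : Nat.gcd a b ∣ x)
    (hx : a * b ≤ x) : ∃ i j : ℕ, x = i * a + j * b := by
  set g := Nat.gcd a b with hg
  have hgpos : 0 < g := Nat.gcd_pos_of_pos_left b ha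
  obtain ⟨x₁, hx₁⟩ := hd
  obtain ⟨a₁, ha₁⟩ : g ∣ a := Nat.gcd_dvd_left a b
  obtain ⟨b₁, hb₁⟩ : g ∣ b := Nat.gcd_dvd_right a b
  have hcop : Nat.Coprime a₁ b₁ := by
    have h1 : a / g = a₁ := by rw [ha₁]; exact Nat.mul_div_cancel_left _ hgpos
    have h2 : b / g = b₁ := by rw [hb₁]; exact Nat.mul_div_cancel_left _ hgpos
    have h3 := Nat.coprime_div_gcd_div_gcd (m := a) (n := b) hgpos
    rwa [h1, h2] at h3
  have ha₁p : 0 < a₁ := by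
    rcases Nat.eq_zero_or_pos a₁ with h | h
    · subst h; simp at ha₁; omega
    · exact h
  have hb₁p : 0 < b₁ := by
    rcases Nat.eq_zero_or_pos b₁ with h | h
    · subst h; simp at hb₁; omega
    · exact h
  have hx₁' : a₁ * b₁ ≤ x₁ := by
    have h1 : g * (g * (a₁ * b₁)) ≤ g * x₁ := by
      calc g * (g * (a₁ * b₁)) = (g * a₁) * (g * b₁) := by ring
        _ ≤ x := by rw [← ha₁, ← hb₁]; exact hx
        _ = g * x₁ := hx₁
    have h2 : g * (a₁ * b₁) ≤ x₁ := Nat.le_of_mul_le_mul_left h1 hgpos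
    calc a₁ * b₁ = 1 * (a₁ * b₁) := (one_mul _).symm
      _ ≤ g * (a₁ * b₁) := Nat.mul_le_mul_right _ hgpos
      _ ≤ x₁ := h2
  obtain ⟨i, j, hij⟩ := pair_rep_coprime ha₁p hb₁p hcop hx₁'
  exact ⟨i, j, by rw [hx₁, hij, ha₁, hb₁]; ring⟩

/-- Iterated sumset: `rep A n = A + A + ⋯ + A` (`n` times), with `rep A 0 = {0}`. -/
def rep (A : Finset ℕ) : ℕ → Finset ℕ
  | 0 => {0}
  | n + 1 => rep A n + A

lemma rep_add (A : Finset ℕ) (n k : ℕ) : rep A (n + k) = rep A n + rep A k := by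
  induction k with
  | zero =>
    show rep A n = rep A n + {0}
    have : ({0} : Finset ℕ) = 0 := rfl
    rw [this, add_zero]
  | succ k IH =>
    show rep A (n + k) + A = rep A n + (rep A k + A)
    rw [IH, add_assoc]

lemma zero_mem_rep {A : Finset ℕ} (h0 : 0 ∈ A) (n : ℕ) : 0 ∈ rep A n := by
  induction n with
  | zero => exact Finset.mem_singleton_self 0
  | succ n IH => exact Finset.mem_add.mpr ⟨0, IH, 0, h0, rfl⟩

lemma rep_mono {A : Finset ℕ} (h0 : 0 ∈ A) {n n' : ℕ} (h : n ≤ n') :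
    rep A n ⊆ rep A n' := by
  intro x hx
  obtain ⟨k, rfl⟩ := Nat.exists_eq_add_of_le h
  rw [rep_add]
  exact Finset.mem_add.mpr ⟨x, hx, 0, zero_mem_rep h0 k, by omega⟩

lemma mem_rep_one {A : Finset ℕ} {a : ℕ} (ha : a ∈ A) : a ∈ rep A 1 := by
  exact Finset.mem_add.mpr ⟨0, Finset.mem_singleton_self 0, a, ha, by omega⟩

lemma rep_subset_closure {A : Finset ℕ} {n : ℕ} {x : ℕ} (hx : x ∈ rep A n) :
    x ∈ AddSubmonoid.closure (A : Set ℕ) := by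
  induction n generalizing x with
  | zero => rw [Finset.mem_singleton.mp hx]; exact zero_mem _
  | succ n IH =>
    obtain ⟨y, hy, a, ha, rfl⟩ := Finset.mem_add.mp hx
    exact add_mem (IH hy) (AddSubmonoid.subset_closure (by exact_mod_cast ha))

/-- weight bound: any `x` in the submonoid generated by `A` is a sum of at most `x` elements. -/
lemma mem_rep_self {A : Finset ℕ} (h0 : 0 ∈ A) {x : ℕ}
    (hx : x ∈ AddSubmonoid.closure (A : Set ℕ)) : x ∈ rep A x := by
  induction hx using AddSubmonoid.closure_induction with
  | mem a ha =>
    have ha' : a ∈ A := by exact_mod_cast ha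
    rcases Nat.eq_zero_or_pos a with rfl | hapos
    · exact zero_mem_rep h0 0
    · exact rep_mono h0 hapos (mem_rep_one ha')
  | zero => exact Finset.mem_singleton_self 0
  | add y z _ _ hy hz =>
    rw [rep_add]
    exact Finset.mem_add.mpr ⟨y, hy, z, hz, rfl⟩

lemma le_of_mem_rep {A : Finset ℕ} {n x : ℕ} (hx : x ∈ rep A n) : x ≤ n * A.sup id := by
  induction n generalizing x with
  | zero =>
    have := Finset.mem_singleton.mp hx
    omega
  | succ n IH =>
    obtain ⟨y, hy, a, ha, rfl⟩ := Finset.mem_add.mp hx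
    have h1 := IH hy
    have h2 : a ≤ A.sup id := Finset.le_sup (f := id) ha
    calc y + a ≤ n * A.sup id + A.sup id := by omega
      _ = (n + 1) * A.sup id := by ring

lemma mul_mem_rep {A : Finset ℕ} {a : ℕ} (ha : a ∈ A) (h0 : 0 ∈ A) (k : ℕ) :
    k * a ∈ rep A k := by
  induction k with
  | zero =>
    show 0 * a ∈ ({0} : Finset ℕ)
    rw [zero_mul]
    exact Finset.mem_singleton_self 0
  | succ k IH =>
    have : (k + 1) * a = k * a + a := by ring
    rw [this]
    exact Finset.mem_add.mpr ⟨k * a, IH, a, ha, rfl⟩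

/-- the reflected set `maxA - A`. -/
def mir (A : Finset ℕ) : Finset ℕ := A.image (fun a => A.sup id - a)

lemma sup_mem {A : Finset ℕ} (h0 : 0 ∈ A) : A.sup id ∈ A := by
  have hne : A.Nonempty := ⟨0, h0⟩
  have := Finset.max'_mem A hne
  have h2 : A.max' hne = A.sup id := by rw [Finset.max'_eq_sup', Finset.sup'_eq_sup]
  rwa [h2] at this

lemma zero_mem_mir {A : Finset ℕ} (h0 : 0 ∈ A) : 0 ∈ mir A :=
  Finset.mem_image.mpr ⟨A.sup id, sup_mem h0, by omega⟩

lemma sup_mem_mir {A : Finset ℕ} (h0 : 0 ∈ A) : A.sup id ∈ mir A :=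
  Finset.mem_image.mpr ⟨0, h0, by omega⟩

lemma sup_mir {A : Finset ℕ} (h0 : 0 ∈ A) : (mir A).sup id = A.sup id := by
  apply le_antisymm
  · apply Finset.sup_le
    intro b hb
    obtain ⟨a, _, rfl⟩ := Finset.mem_image.mp hb
    simp only [id]
    omega
  · exact Finset.le_sup (f := id) (sup_mem_mir h0)

lemma mir_mir {A : Finset ℕ} (h0 : 0 ∈ A) : mir (mir A) = A := by
  have h2 : (mir A).sup id = A.sup id := sup_mir h0
  ext x
  constructor
  · intro hx
    obtain ⟨b, hb, hxx⟩ := Finset.mem_image.mp hx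
    obtain ⟨a, ha, hba⟩ := Finset.mem_image.mp hb
    have h1 : a ≤ A.sup id := Finset.le_sup (f := id) ha
    have hxa : x = a := by rw [h2] at hxx; omega
    rwa [hxa]
  · intro hx
    have h1 : x ≤ A.sup id := Finset.le_sup (f := id) hx
    refine Finset.mem_image.mpr ⟨A.sup id - x, Finset.mem_image.mpr ⟨x, hx, rfl⟩, ?_⟩
    rw [h2]
    omega

lemma mir_mem_rep {A : Finset ℕ} (h0 : 0 ∈ A) {n x : ℕ} (hx : x ∈ rep A n) :
    n * A.sup id - x ∈ rep (mir A) n := by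
  induction n generalizing x with
  | zero => simpa [rep] using Finset.mem_singleton.mp hx
  | succ n IH =>
    obtain ⟨y, hy, a, ha, rfl⟩ := Finset.mem_add.mp hx
    have h1 : y ≤ n * A.sup id := le_of_mem_rep hy
    have h2 : a ≤ A.sup id := Finset.le_sup (f := id) ha
    have h3 : (n + 1) * A.sup id - (y + a) = (n * A.sup id - y) + (A.sup id - a) := by
      have : (n+1) * A.sup id = n * A.sup id + A.sup id := by ring
      omega
    rw [h3]
    exact Finset.mem_add.mpr ⟨_, IH hy, _, Finset.mem_image.mpr ⟨a, ha, rfl⟩, rfl⟩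

lemma gcd_mir {A : Finset ℕ} (h0 : 0 ∈ A) : (mir A).gcd id = A.gcd id := by
  have hm : A.sup id ∈ A := sup_mem h0
  apply Nat.dvd_antisymm
  · apply Finset.dvd_gcd
    intro a ha
    have h1 : (mir A).gcd id ∣ A.sup id := Finset.gcd_dvd (f := id) (sup_mem_mir h0)
    have h2 : (mir A).gcd id ∣ A.sup id - a :=
      Finset.gcd_dvd (f := id) (Finset.mem_image.mpr ⟨a, ha, rfl⟩)
    have h3 : a ≤ A.sup id := Finset.le_sup (f := id) ha
    have : a = A.sup id - (A.sup id - a) := by omega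
    rw [this]
    exact Nat.dvd_sub h1 h2
  · apply Finset.dvd_gcd
    intro b hb
    obtain ⟨a, ha, rfl⟩ := Finset.mem_image.mp hb
    exact Nat.dvd_sub (Finset.gcd_dvd (f := id) hm) (Finset.gcd_dvd (f := id) ha)

lemma gcd_dvd_of_mem_closure {A : Finset ℕ} {x : ℕ}
    (hx : x ∈ AddSubmonoid.closure (A : Set ℕ)) : A.gcd id ∣ x := by
  induction hx using AddSubmonoid.closure_induction with
  | mem y hy => exact Finset.gcd_dvd (by exact_mod_cast hy)
  | zero => exact dvd_zero _
  | add y z _ _ hy hz => exact dvd_add hy hz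

lemma frob (A : Finset ℕ) :
    ∃ F : ℕ, ∀ x : ℕ, A.gcd id ∣ x → F ≤ x → x ∈ AddSubmonoid.closure (A : Set ℕ) := by
  classical
  induction A using Finset.induction_on with
  | empty =>
    refine ⟨0, fun x hd _ => ?_⟩
    simp only [Finset.gcd_empty] at hd
    rw [Nat.zero_dvd.mp hd]
    exact zero_mem _
  | @insert a A' ha IH =>
    obtain ⟨F', hF'⟩ := IH
    have hsub : AddSubmonoid.closure (A' : Set ℕ) ≤
        AddSubmonoid.closure ((insert a A' : Finset ℕ) : Set ℕ) := by
      apply AddSubmonoid.closure_mono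
      exact_mod_cast Finset.subset_insert a A'
    have hgcd : (insert a A').gcd id = Nat.gcd a (A'.gcd id) := by
      rw [Finset.gcd_insert]; rfl
    set d' := A'.gcd id with hd'
    rcases Nat.eq_zero_or_pos a with ha0 | hapos
    · refine ⟨F', fun x hd hx => ?_⟩
      apply hsub
      apply hF' x _ hx
      rw [hgcd, ha0, Nat.gcd_zero_left] at hd
      exact hd
    rcases Nat.eq_zero_or_pos d' with hd0 | hd'pos
    · refine ⟨0, fun x hd _ => ?_⟩
      rw [hgcd, hd0, Nat.gcd_zero_right] at hd
      obtain ⟨k, rfl⟩ := hd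
      have hmem : a ∈ AddSubmonoid.closure ((insert a A' : Finset ℕ) : Set ℕ) :=
        AddSubmonoid.subset_closure (by exact_mod_cast Finset.mem_insert_self a A')
      have := AddSubmonoid.nsmul_mem _ hmem k
      simpa [smul_eq_mul, mul_comm] using this
    · set b := d' * (1 + a * F') with hb
      have hbpos : 0 < b := by positivity
      have hbF' : F' ≤ b := by
        have h1 : 1 ≤ d' * a := Nat.one_le_iff_ne_zero.mpr (by positivity)
        calc F' ≤ d' * a * F' + d' := by nlinarith
          _ = b := by rw [hb]; ring
      have hbmem : b ∈ AddSubmonoid.closure ((insert a A' : Finset ℕ) : Set ℕ) :=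
        hsub (hF' b ⟨1 + a * F', rfl⟩ hbF')
      have hamem : a ∈ AddSubmonoid.closure ((insert a A' : Finset ℕ) : Set ℕ) :=
        AddSubmonoid.subset_closure (by exact_mod_cast Finset.mem_insert_self a A')
      have hgab : Nat.gcd a b = Nat.gcd a d' := by
        rw [hb]
        have hcop : Nat.Coprime (1 + a * F') a := by
          have : Nat.gcd a (1 + a * F') = Nat.gcd a 1 := Nat.gcd_add_mul_left_right a 1 F'
          rw [Nat.gcd_one_right] at this
          exact Nat.Coprime.symm this
        rw [Nat.gcd_comm a (d' * (1 + a * F')), Nat.Coprime.gcd_mul_right_cancel d' hcop,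
          Nat.gcd_comm]
      refine ⟨a * b, fun x hd hx => ?_⟩
      have hdvd : Nat.gcd a b ∣ x := by rw [hgab, ← hgcd]; exact hd
      obtain ⟨i, j, rfl⟩ := pair_rep hapos hbpos hdvd hx
      have h1 := AddSubmonoid.nsmul_mem _ hamem i
      have h2 := AddSubmonoid.nsmul_mem _ hbmem j
      have := add_mem h1 h2
      simpa [smul_eq_mul, mul_comm] using this

lemma exists_bound_finset (T : ℕ → AddSubmonoid ℕ) (hmono : ∀ i j, i ≤ j → T i ≤ T j)
    (G : Finset ℕ) (h : ∀ y ∈ G, ∃ n, y ∈ T n) : ∃ N, ∀ y ∈ G, y ∈ T N := by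
  classical
  induction G using Finset.induction_on with
  | empty => exact ⟨0, by simp⟩
  | @insert a G' ha IH =>
    obtain ⟨N', hN'⟩ := IH (fun y hy => h y (Finset.mem_insert_of_mem hy))
    obtain ⟨Na, hNa⟩ := h a (Finset.mem_insert_self a G')
    refine ⟨max Na N', fun y hy => ?_⟩
    rcases Finset.mem_insert.mp hy with rfl | hy
    · exact hmono Na _ (le_max_left _ _) hNa
    · exact hmono N' _ (le_max_right _ _) (hN' y hy)

lemma nat_submonoid_acc (T : ℕ → AddSubmonoid ℕ) (hT : ∀ n, T n ≤ T (n + 1)) :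
    ∃ n, ∀ m, n ≤ m → T m = T n := by
  classical
  have hmono : ∀ i j, i ≤ j → T i ≤ T j := by
    intro i j hij
    induction j, hij using Nat.le_induction with
    | base => exact le_rfl
    | succ n hn IH => exact IH.trans (hT n)
  set U : AddSubmonoid ℕ := ⨆ n, T n with hU
  have hdir : Directed (· ≤ ·) T := fun i j => ⟨max i j, hmono i _ (le_max_left _ _),
    hmono j _ (le_max_right _ _)⟩
  have hmemU : ∀ x, x ∈ U ↔ ∃ n, x ∈ T n := fun x =>
    AddSubmonoid.mem_iSup_of_directed hdir
  -- gcd-realizing finite subset of U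
  have hD : ∃ E : Finset ℕ, (↑E : Set ℕ) ⊆ (U : Set ℕ) ∧ ∀ x ∈ U, E.gcd id ∣ x := by
    by_cases hS : ∀ x ∈ U, x = 0
    · exact ⟨∅, by simp, fun x hx => by rw [hS x hx]; exact dvd_zero _⟩
    · push_neg at hS
      obtain ⟨s, hsU, hs0⟩ := hS
      set P : ℕ → Prop := fun g => 0 < g ∧ ∃ E : Finset ℕ, (↑E : Set ℕ) ⊆ (U : Set ℕ) ∧ E.gcd id = g
        with hP
      have hPex : ∃ g, P g :=
        ⟨s, Nat.pos_of_ne_zero hs0, {s}, by simpa using hsU, by simp⟩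
      set d₀ := Nat.find hPex with hd₀
      have hPd₀ : P d₀ := Nat.find_spec hPex
      have hmin : ∀ g, P g → d₀ ≤ g := fun g hg => Nat.find_min' hPex hg
      obtain ⟨hd₀pos, E₀, hE₀U, hE₀g⟩ := hPd₀
      refine ⟨E₀, hE₀U, fun x hx => ?_⟩
      have hxE : ((insert x E₀ : Finset ℕ) : Set ℕ) ⊆ (U : Set ℕ) := by
        intro y hy
        simp only [Finset.coe_insert, Set.mem_insert_iff] at hy
        rcases hy with rfl | hy
        · exact hx
        · exact hE₀U hy
      have hg1 : (insert x E₀).gcd id = Nat.gcd x d₀ := by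
        rw [Finset.gcd_insert, hE₀g]; rfl
      have hgpos : 0 < Nat.gcd x d₀ := Nat.gcd_pos_of_pos_right x hd₀pos
      have hgle : Nat.gcd x d₀ ≤ d₀ := Nat.le_of_dvd hd₀pos (Nat.gcd_dvd_right x d₀)
      have hge : d₀ ≤ Nat.gcd x d₀ := hmin _ ⟨hgpos, insert x E₀, hxE, hg1⟩
      have heq : Nat.gcd x d₀ = d₀ := le_antisymm hgle hge
      rw [hE₀g, ← heq]
      exact Nat.gcd_dvd_left x d₀
  obtain ⟨E, hEU, hEdvd⟩ := hD
  obtain ⟨F, hF⟩ := frob E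
  set G : Finset ℕ := (Finset.range F).filter (fun y => y ∈ U) with hG
  obtain ⟨N, hN⟩ := exists_bound_finset T hmono (E ∪ G) (by
    intro y hy
    rcases Finset.mem_union.mp hy with hy | hy
    · exact (hmemU y).mp (hEU hy)
    · exact (hmemU y).mp ((Finset.mem_filter.mp hy).2))
  refine ⟨N, fun m hm => le_antisymm ?_ (hmono N m hm)⟩
  intro x hx
  have hxU : x ∈ U := (le_iSup T m) hx
  by_cases hxF : x < F
  · exact hN x (Finset.mem_union_right _ (Finset.mem_filter.mpr
      ⟨Finset.mem_range.mpr hxF, hxU⟩))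
  · have hxcl : x ∈ AddSubmonoid.closure (E : Set ℕ) :=
      hF x (hEdvd x hxU) (le_of_not_gt hxF)
    have : AddSubmonoid.closure (E : Set ℕ) ≤ T N := by
      rw [AddSubmonoid.closure_le]
      intro e he
      exact hN e (Finset.mem_union_left _ (by exact_mod_cast he))
    exact this hxcl
lemma mem_rep_big {A : Finset ℕ} (h0 : 0 ∈ A) {F n x : ℕ}
    (hF : ∀ y, A.gcd id ∣ y → F ≤ y → y ∈ AddSubmonoid.closure (A : Set ℕ))
    (hnF : F ≤ n) (hn2 : (F + A.sup id) * A.sup id ≤ n)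
    (hx1 : x ≤ n * A.sup id)
    (hx2 : x ∈ AddSubmonoid.closure (A : Set ℕ))
    (hx3 : n * A.sup id - x ∈ AddSubmonoid.closure ((mir A : Finset ℕ) : Set ℕ)) :
    x ∈ rep A n := by
  obtain ⟨m, hmeq⟩ : ∃ m, A.sup id = m := ⟨_, rfl⟩
  rw [hmeq] at hx1 hx3 hn2
  by_cases hxn : x ≤ n
  · exact rep_mono h0 hxn (mem_rep_self h0 hx2)
  by_cases hxtop : n * m - x ≤ n
  · have h0m : 0 ∈ mir A := zero_mem_mir h0
    have h1 : n * m - x ∈ rep (mir A) n :=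
      rep_mono h0m hxtop (mem_rep_self h0m hx3)
    have h2 := mir_mem_rep h0m h1
    rw [sup_mir h0, mir_mir h0, hmeq] at h2
    have h3 : n * m - (n * m - x) = x := by omega
    rwa [h3] at h2
  -- middle region
  have hmpos : 1 ≤ m := by
    by_contra hc
    have : m = 0 := by omega
    rw [this] at hx1
    omega
  have hdx : A.gcd id ∣ x := gcd_dvd_of_mem_closure hx2
  have hdm : A.gcd id ∣ m := by
    rw [← hmeq]; exact Finset.gcd_dvd (f := id) (sup_mem h0)
  obtain ⟨q, hq⟩ : ∃ q, (x - F) / m = q := ⟨_, rfl⟩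
  obtain ⟨r, hr⟩ : ∃ r, x - m * q = r := ⟨_, rfl⟩
  have hdiv := Nat.div_add_mod (x - F) m
  have hmod : (x - F) % m < m := Nat.mod_lt _ hmpos
  rw [hq] at hdiv
  have hrF : F ≤ r := by omega
  have hrFm : r < F + m := by omega
  have hqx : m * q ≤ x := by omega
  have hdr : A.gcd id ∣ r := by
    rw [← hr]; exact Nat.dvd_sub hdx (Dvd.dvd.mul_right hdm q)
  have hrcl : r ∈ AddSubmonoid.closure (A : Set ℕ) := hF r hdr hrF
  have hrrep : r ∈ rep A (F + m) := rep_mono h0 (by omega) (mem_rep_self h0 hrcl)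
  have hqrep : m * q ∈ rep A q := by
    have := mul_mem_rep (sup_mem h0) h0 q
    rwa [hmeq, mul_comm] at this
  have hxsum : x = m * q + r := by omega
  have hmem : x ∈ rep A (q + (F + m)) := by
    rw [rep_add, hxsum]
    exact Finset.mem_add.mpr ⟨m * q, hqrep, r, hrrep, rfl⟩
  have hqbound : q + (F + m) ≤ n := by
    have h1 : (q + (F + m)) * m = m * q + (F + m) * m := by ring
    have h2 : x + n < n * m := by omega
    have h3 : (q + (F + m)) * m < n * m := by omega
    exact le_of_lt (Nat.lt_of_mul_lt_mul_right h3)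
  exact rep_mono h0 hqbound hmem

lemma dvd_rep {A B : Finset ℕ} (h0A : 0 ∈ A) (h0B : 0 ∈ B)
    (hB : (B : Set ℕ) ⊆ (AddSubmonoid.closure (A : Set ℕ) : Set ℕ))
    (hB' : ∀ b ∈ B, B.sup id - b ∈ AddSubmonoid.closure ((mir A : Finset ℕ) : Set ℕ)) :
    ∃ n C, 0 ∈ C ∧ rep A n = B + C := by
  classical
  obtain ⟨m, hmeq⟩ : ∃ m, A.sup id = m := ⟨_, rfl⟩
  rcases Nat.eq_zero_or_pos m with hm0 | hmpos
  · -- A = {0}, B = {0}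
    have hBeq : B = {0} := by
      apply Finset.eq_singleton_iff_unique_mem.mpr
      refine ⟨h0B, fun b hb => ?_⟩
      have h1 : b ∈ AddSubmonoid.closure (A : Set ℕ) := hB hb
      have h2 : b ∈ rep A b := mem_rep_self h0A h1
      have h3 : b ≤ b * A.sup id := le_of_mem_rep h2
      rw [hmeq, hm0] at h3
      omega
    refine ⟨0, {0}, Finset.mem_singleton_self 0, ?_⟩
    rw [hBeq]
    show ({0} : Finset ℕ) = {0} + {0}
    ext y
    simp [Finset.mem_add]
  obtain ⟨F, hF⟩ := frob A
  obtain ⟨F₀, hF₀⟩ := frob (mir A)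
  have hF' : ∀ y, A.gcd id ∣ y → F₀ ≤ y →
      y ∈ AddSubmonoid.closure ((mir A : Finset ℕ) : Set ℕ) := by
    intro y hy hy2
    exact hF₀ y (by rw [gcd_mir h0A]; exact hy) hy2
  obtain ⟨β, hβeq⟩ : ∃ β, B.sup id = β := ⟨_, rfl⟩
  have hβB : β ∈ B := by rw [← hβeq]; exact sup_mem h0B
  have hbub : ∀ b ∈ B, b ≤ β := fun b hb => by
    rw [← hβeq]; exact Finset.le_sup (f := id) hb
  have hdβ : A.gcd id ∣ β := gcd_dvd_of_mem_closure (hB hβB)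
  have hdm : A.gcd id ∣ m := by rw [← hmeq]; exact Finset.gcd_dvd (f := id) (sup_mem h0A)
  obtain ⟨n, hn⟩ : ∃ n, F + (F + m) * m + 2 * β + F₀ + 1 = n := ⟨_, rfl⟩
  have haux : 0 ≤ (F + m) * m := Nat.zero_le _
  have hnm : n ≤ n * m := Nat.le_mul_of_pos_right n hmpos
  have hnF : F ≤ n := by omega
  have hn2 : (F + m) * m ≤ n := by omega
  have hbig : 2 * β + F₀ + F + 1 ≤ n * m := by omega
  set C := (Finset.range (n * m - β + 1)).filter
      (fun c => c ∈ AddSubmonoid.closure (A : Set ℕ) ∧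
        (n * m - β - c) ∈ AddSubmonoid.closure ((mir A : Finset ℕ) : Set ℕ)) with hC
  have hmemC : ∀ c, c ∈ C ↔ (c ≤ n * m - β ∧ c ∈ AddSubmonoid.closure (A : Set ℕ) ∧
      (n * m - β - c) ∈ AddSubmonoid.closure ((mir A : Finset ℕ) : Set ℕ)) := by
    intro c
    rw [hC, Finset.mem_filter, Finset.mem_range]
    constructor
    · rintro ⟨h1, h2, h3⟩; exact ⟨by omega, h2, h3⟩
    · rintro ⟨h1, h2, h3⟩; exact ⟨by omega, h2, h3⟩
  have h0C : 0 ∈ C := by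
    rw [hmemC]
    refine ⟨Nat.zero_le _, zero_mem _, ?_⟩
    rw [Nat.sub_zero]
    exact hF' _ (Nat.dvd_sub (Dvd.dvd.mul_left hdm n) hdβ) (by omega)
  refine ⟨n, C, h0C, ?_⟩
  ext x
  constructor
  · intro hx
    have hx1 : x ≤ n * m := by rw [← hmeq]; exact le_of_mem_rep hx
    have hx2 : x ∈ AddSubmonoid.closure (A : Set ℕ) := rep_subset_closure hx
    have hx3 : n * m - x ∈ AddSubmonoid.closure ((mir A : Finset ℕ) : Set ℕ) := by
      have := mir_mem_rep h0A hx
      rw [hmeq] at this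
      exact rep_subset_closure this
    have hdx : A.gcd id ∣ x := gcd_dvd_of_mem_closure hx2
    by_cases hcase : x + β + F₀ ≤ n * m
    · refine Finset.mem_add.mpr ⟨0, h0B, x, ?_, by omega⟩
      rw [hmemC]
      refine ⟨by omega, hx2, ?_⟩
      exact hF' _ (Nat.dvd_sub (Nat.dvd_sub (Dvd.dvd.mul_left hdm n) hdβ) hdx) (by omega)
    · have hβx : β ≤ x := by omega
      refine Finset.mem_add.mpr ⟨β, hβB, x - β, ?_, by omega⟩
      rw [hmemC]
      refine ⟨by omega, ?_, ?_⟩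
      · exact hF _ (Nat.dvd_sub hdx hdβ) (by omega)
      · have heq : n * m - β - (x - β) = n * m - x := by omega
        rw [heq]
        exact hx3
  · intro hx
    obtain ⟨b, hb, c, hc, rfl⟩ := Finset.mem_add.mp hx
    rw [hmemC] at hc
    obtain ⟨hcr, hc1, hc2⟩ := hc
    have hbβ : b ≤ β := hbub b hb
    have hbcl : b ∈ AddSubmonoid.closure (A : Set ℕ) := hB hb
    have hb' : β - b ∈ AddSubmonoid.closure ((mir A : Finset ℕ) : Set ℕ) := by
      rw [← hβeq]; exact hB' b hb
    apply mem_rep_big h0A hF hnF (by rw [hmeq]; exact hn2)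
    · rw [hmeq]; omega
    · exact add_mem hbcl hc1
    · rw [hmeq]
      have heq : n * m - (b + c) = (β - b) + (n * m - β - c) := by omega
      rw [heq]
      exact add_mem hb' hc2

lemma zero_mem_add {A B : Finset ℕ} (h0A : 0 ∈ A) (h0B : 0 ∈ B) : 0 ∈ A + B :=
  Finset.mem_add.mpr ⟨0, h0A, 0, h0B, rfl⟩

lemma supAdd {A B : Finset ℕ} (h0A : 0 ∈ A) (h0B : 0 ∈ B) :
    (A + B).sup id = A.sup id + B.sup id := by
  apply le_antisymm
  · apply Finset.sup_le
    intro x hx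
    obtain ⟨a, ha, b, hb, rfl⟩ := Finset.mem_add.mp hx
    have h1 : a ≤ A.sup id := Finset.le_sup (f := id) ha
    have h2 : b ≤ B.sup id := Finset.le_sup (f := id) hb
    simp only [id]
    omega
  · exact Finset.le_sup (f := id)
      (Finset.mem_add.mpr ⟨A.sup id, sup_mem h0A, B.sup id, sup_mem h0B, rfl⟩)

lemma mir_add {A B : Finset ℕ} (h0A : 0 ∈ A) (h0B : 0 ∈ B) :
    mir (A + B) = mir A + mir B := by
  have hs := supAdd h0A h0B
  ext x
  constructor
  · intro hx
    obtain ⟨y, hy, hyx⟩ := Finset.mem_image.mp hx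
    obtain ⟨a, ha, b, hb, rfl⟩ := Finset.mem_add.mp hy
    have h1 : a ≤ A.sup id := Finset.le_sup (f := id) ha
    have h2 : b ≤ B.sup id := Finset.le_sup (f := id) hb
    refine Finset.mem_add.mpr ⟨A.sup id - a, Finset.mem_image.mpr ⟨a, ha, rfl⟩,
      B.sup id - b, Finset.mem_image.mpr ⟨b, hb, rfl⟩, ?_⟩
    rw [hs] at hyx
    omega
  · intro hx
    obtain ⟨u, hu, v, hv, rfl⟩ := Finset.mem_add.mp hx
    obtain ⟨a, ha, rfl⟩ := Finset.mem_image.mp hu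
    obtain ⟨b, hb, rfl⟩ := Finset.mem_image.mp hv
    have h1 : a ≤ A.sup id := Finset.le_sup (f := id) ha
    have h2 : b ≤ B.sup id := Finset.le_sup (f := id) hb
    refine Finset.mem_image.mpr ⟨a + b, Finset.mem_add.mpr ⟨a, ha, b, hb, rfl⟩, ?_⟩
    rw [hs]
    omega

lemma closure_le_addl {A A' : Finset ℕ} (h0 : 0 ∈ A') :
    AddSubmonoid.closure (A : Set ℕ) ≤ AddSubmonoid.closure ((A + A' : Finset ℕ) : Set ℕ) := by
  apply AddSubmonoid.closure_mono
  intro a ha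
  have ha' : a ∈ A := by exact_mod_cast ha
  exact_mod_cast Finset.mem_add.mpr ⟨a, ha', 0, h0, add_zero a⟩

lemma closure_le_addr {A A' : Finset ℕ} (h0 : 0 ∈ A) :
    AddSubmonoid.closure (A' : Set ℕ) ≤ AddSubmonoid.closure ((A + A' : Finset ℕ) : Set ℕ) := by
  rw [add_comm]
  exact closure_le_addl h0

lemma closure_mir_le_addl {A A' : Finset ℕ} (h0A : 0 ∈ A) (h0A' : 0 ∈ A') :
    AddSubmonoid.closure ((mir A : Finset ℕ) : Set ℕ) ≤
      AddSubmonoid.closure ((mir (A + A') : Finset ℕ) : Set ℕ) := by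
  rw [mir_add h0A h0A']
  exact closure_le_addl (zero_mem_mir h0A')

lemma closure_mir_le_addr {A A' : Finset ℕ} (h0A : 0 ∈ A) (h0A' : 0 ∈ A') :
    AddSubmonoid.closure ((mir A' : Finset ℕ) : Set ℕ) ≤
      AddSubmonoid.closure ((mir (A + A') : Finset ℕ) : Set ℕ) := by
  rw [mir_add h0A h0A']
  exact closure_le_addr (zero_mem_mir h0A)

lemma rep_mem_H {Hn : Set (Finset ℕ)} (hD : IsDCS Hn) {A : Finset ℕ} (hA : A ∈ Hn) (n : ℕ) :
    rep A n ∈ Hn := by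
  induction n with
  | zero => exact hD.2.1
  | succ n IH => exact hD.2.2.1 _ IH _ hA

lemma exists_single {Hn : Set (Finset ℕ)} (hD : IsDCS Hn) {x : ℕ}
    (hx : x ∈ AddSubmonoid.closure (⋃ A ∈ Hn, (A : Set ℕ))) :
    ∃ A ∈ Hn, x ∈ AddSubmonoid.closure (A : Set ℕ) := by
  induction hx using AddSubmonoid.closure_induction with
  | mem y hy =>
    obtain ⟨A, hA, hyA⟩ := Set.mem_iUnion₂.mp hy
    exact ⟨A, hA, AddSubmonoid.subset_closure hyA⟩
  | zero => exact ⟨{0}, hD.2.1, zero_mem _⟩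
  | add y z _ _ hy hz =>
    obtain ⟨A, hA, hyA⟩ := hy
    obtain ⟨A', hA', hzA⟩ := hz
    exact ⟨A + A', hD.2.2.1 _ hA _ hA',
      add_mem (closure_le_addl (hD.1 _ hA') hyA) (closure_le_addr (hD.1 _ hA) hzA)⟩

lemma exists_single_mir {Hn : Set (Finset ℕ)} (hD : IsDCS Hn) {x : ℕ}
    (hx : x ∈ AddSubmonoid.closure (⋃ A ∈ Hn, ((mir A : Finset ℕ) : Set ℕ))) :
    ∃ A ∈ Hn, x ∈ AddSubmonoid.closure ((mir A : Finset ℕ) : Set ℕ) := by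
  induction hx using AddSubmonoid.closure_induction with
  | mem y hy =>
    obtain ⟨A, hA, hyA⟩ := Set.mem_iUnion₂.mp hy
    exact ⟨A, hA, AddSubmonoid.subset_closure hyA⟩
  | zero => exact ⟨{0}, hD.2.1, zero_mem _⟩
  | add y z _ _ hy hz =>
    obtain ⟨A, hA, hyA⟩ := hy
    obtain ⟨A', hA', hzA⟩ := hz
    exact ⟨A + A', hD.2.2.1 _ hA _ hA',
      add_mem (closure_mir_le_addl (hD.1 _ hA) (hD.1 _ hA') hyA)
        (closure_mir_le_addr (hD.1 _ hA) (hD.1 _ hA') hzA)⟩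

lemma combine {Hn : Set (Finset ℕ)} (hD : IsDCS Hn) (s : Finset ℕ)
    (g : Finset ℕ → AddSubmonoid ℕ)
    (hmono : ∀ A A', A ∈ Hn → A' ∈ Hn → g A ≤ g (A + A') ∧ g A' ≤ g (A + A'))
    (h : ∀ b ∈ s, ∃ A ∈ Hn, b ∈ g A) : ∃ A ∈ Hn, ∀ b ∈ s, b ∈ g A := by
  classical
  induction s using Finset.induction_on with
  | empty => exact ⟨{0}, hD.2.1, by simp⟩
  | @insert b s' hb IH =>
    obtain ⟨A', hA', hA'p⟩ := IH (fun y hy => h y (Finset.mem_insert_of_mem hy))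
    obtain ⟨Ab, hAb, hAbp⟩ := h b (Finset.mem_insert_self b s')
    refine ⟨Ab + A', hD.2.2.1 _ hAb _ hA', fun y hy => ?_⟩
    rcases Finset.mem_insert.mp hy with rfl | hy
    · exact (hmono Ab A' hAb hA').1 hAbp
    · exact (hmono Ab A' hAb hA').2 (hA'p y hy)

/-- Every ascending chain of divisor-closed submonoids of `P_fin,0(ℕ)`
becomes stationary. -/
theorem ascending_chain_condition (H : ℕ → Set (Finset ℕ))
    (hDCS : ∀ n, IsDCS (H n)) (hchain : ∀ n, H n ⊆ H (n + 1)) :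
    ∃ n : ℕ, ∀ m : ℕ, n ≤ m → H m = H n := by
  classical
  have hHmono : ∀ i j, i ≤ j → H i ⊆ H j := by
    intro i j hij
    induction j, hij using Nat.le_induction with
    | base => exact fun _ h => h
    | succ n hn IH => exact fun x hx => hchain n (IH hx)
  set T : ℕ → AddSubmonoid ℕ := fun n => AddSubmonoid.closure (⋃ A ∈ H n, (A : Set ℕ))
    with hT
  set T' : ℕ → AddSubmonoid ℕ :=
    fun n => AddSubmonoid.closure (⋃ A ∈ H n, ((mir A : Finset ℕ) : Set ℕ)) with hT'
  have hTmono : ∀ n, T n ≤ T (n + 1) := fun n => AddSubmonoid.closure_mono (by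
    intro x hx
    obtain ⟨A, hA, hxA⟩ := Set.mem_iUnion₂.mp hx
    exact Set.mem_iUnion₂.mpr ⟨A, hchain n hA, hxA⟩)
  have hT'mono : ∀ n, T' n ≤ T' (n + 1) := fun n => AddSubmonoid.closure_mono (by
    intro x hx
    obtain ⟨A, hA, hxA⟩ := Set.mem_iUnion₂.mp hx
    exact Set.mem_iUnion₂.mpr ⟨A, hchain n hA, hxA⟩)
  obtain ⟨n₁, hn₁⟩ := nat_submonoid_acc T hTmono
  obtain ⟨n₂, hn₂⟩ := nat_submonoid_acc T' hT'mono
  refine ⟨max n₁ n₂, fun mm hmm => Set.Subset.antisymm ?_ (hHmono _ _ hmm)⟩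
  set n₀ := max n₁ n₂ with hn₀
  intro B hB
  have hTm : T mm = T n₀ :=
    (hn₁ mm (le_trans (le_max_left _ _) hmm)).trans (hn₁ n₀ (le_max_left _ _)).symm
  have hT'm : T' mm = T' n₀ :=
    (hn₂ mm (le_trans (le_max_right _ _) hmm)).trans (hn₂ n₀ (le_max_right _ _)).symm
  have h0B : 0 ∈ B := (hDCS mm).1 B hB
  have hBT : ∀ b ∈ B, b ∈ T n₀ := by
    intro b hb
    rw [← hTm]
    exact AddSubmonoid.subset_closure (Set.mem_iUnion₂.mpr ⟨B, hB, by exact_mod_cast hb⟩)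
  have hBT' : ∀ b ∈ B.image (fun b => B.sup id - b), b ∈ T' n₀ := by
    intro b hb
    rw [← hT'm]
    exact AddSubmonoid.subset_closure (Set.mem_iUnion₂.mpr ⟨B, hB, by exact_mod_cast hb⟩)
  obtain ⟨A₁, hA₁, hA₁p⟩ := combine (hDCS n₀) B
    (fun A => AddSubmonoid.closure (A : Set ℕ))
    (fun A A' hA hA' => ⟨closure_le_addl ((hDCS n₀).1 _ hA'),
      closure_le_addr ((hDCS n₀).1 _ hA)⟩)
    (fun b hb => exists_single (hDCS n₀) (hBT b hb))
  obtain ⟨A₂, hA₂, hA₂p⟩ := combine (hDCS n₀) (B.image (fun b => B.sup id - b))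
    (fun A => AddSubmonoid.closure ((mir A : Finset ℕ) : Set ℕ))
    (fun A A' hA hA' => ⟨closure_mir_le_addl ((hDCS n₀).1 _ hA) ((hDCS n₀).1 _ hA'),
      closure_mir_le_addr ((hDCS n₀).1 _ hA) ((hDCS n₀).1 _ hA')⟩)
    (fun b hb => exists_single_mir (hDCS n₀) (hBT' b hb))
  have h0A₁ : 0 ∈ A₁ := (hDCS n₀).1 _ hA₁
  have h0A₂ : 0 ∈ A₂ := (hDCS n₀).1 _ hA₂
  have hA₃ : A₁ + A₂ ∈ H n₀ := (hDCS n₀).2.2.1 _ hA₁ _ hA₂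
  have h0A₃ : 0 ∈ A₁ + A₂ := zero_mem_add h0A₁ h0A₂
  obtain ⟨n, C, h0C, hEq⟩ := dvd_rep h0A₃ h0B
    (fun b hb => closure_le_addl h0A₂ (hA₁p b (by exact_mod_cast hb)))
    (fun b hb => closure_mir_le_addr h0A₁ h0A₂
      (hA₂p _ (Finset.mem_image.mpr ⟨b, hb, rfl⟩)))
  have hrep : rep (A₁ + A₂) n ∈ H n₀ := rep_mem_H (hDCS n₀) hA₃ n
  exact (hDCS n₀).2.2.2 _ hrep B h0B ⟨C, h0C, hEq⟩
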